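/- arXiv:1605.03472 — 2 statements merged into one kernel-verified Lean document; each statement's English description precedes it below -/
import Mathlib

section
/- For all F, G in an algebra of differential functions V, the Fréchet derivatives satisfy X_F(D_G) = [D_F, D_G] + X_G(D_F) + D_{{F,G}}, where {F,G} = X_F(G) − X_G(F). -/
/-- An algebra of differential functions in one variable `u`:
a commutative `ℂ`-algebra with partial derivatives `∂/∂u⁽ⁿ⁾`, a derivation `∂/∂x`,
distinguished elements `u⁽ⁿ⁾`, and the total derivative `∂`. -/
structure DiffAlg (V : Type) [CommRing V] [Algebra ℂ V] where
  pd : ℕ → Derivation ℂ V V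
  dx : Derivation ℂ V V
  u : ℕ → V
  total : Derivation ℂ V V
  pd_comm : ∀ m n f, pd m (pd n f) = pd n (pd m f)
  pd_dx : ∀ n f, pd n (dx f) = dx (pd n f)
  pd_u : ∀ m n, pd m (u n) = if m = n then 1 else 0
  dx_u : ∀ n, dx (u n) = 0
  pdFin : ∀ f, Set.Finite {n | pd n f ≠ 0}
  total_eq : ∀ f, total f = (∑ᶠ n, u (n + 1) * pd n f) + dx f

namespace DiffAlg

variable {V : Type} [CommRing V] [Algebra ℂ V]

/-- The evolutionary vector field `X_F` applied to `f`. -/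
noncomputable def evf (A : DiffAlg V) (F f : V) : V :=
  ∑ᶠ n, (fun x => A.total x)^[n] F * A.pd n f

end DiffAlg

/-- The Fréchet derivative `D_F` applied to `G`: `D_F(G) = Σ_m (∂F/∂u⁽ᵐ⁾) G⁽ᵐ⁾`. -/
noncomputable def DiffAlg.frechApp {V : Type} [CommRing V] [Algebra ℂ V]
    (A : DiffAlg V) (F G : V) : V :=
  ∑ᶠ m, A.pd m F * (fun x => A.total x)^[m] G

/-- Application of the differential operator with coefficients `a` to an element. -/
noncomputable def DiffAlg.opApp {V : Type} [CommRing V] [Algebra ℂ V]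
    (A : DiffAlg V) (a : ℕ → V) (f : V) : V :=
  ∑ᶠ k, a k * (fun x => A.total x)^[k] f

/-- `(D_A)_F` applied to `G`, where `(D_A)_F = Σ_k F⁽ᵏ⁾ D_{a_k}` for `A = Σ_k a_k ∂^k`. -/
noncomputable def DiffAlg.dafApp {V : Type} [CommRing V] [Algebra ℂ V]
    (A : DiffAlg V) (a : ℕ → V) (F G : V) : V :=
  ∑ᶠ k, (fun x => A.total x)^[k] F * DiffAlg.frechApp A (a k) G

/-- `X_F(D_G)` applied to `H`: `Σ_m X_F(∂G/∂u⁽ᵐ⁾) H⁽ᵐ⁾`. -/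
noncomputable def DiffAlg.evfFrech {V : Type} [CommRing V] [Algebra ℂ V]
    (A : DiffAlg V) (F G Hf : V) : V :=
  ∑ᶠ m, DiffAlg.evf A F (A.pd m G) * (fun x => A.total x)^[m] Hf

namespace DAux

variable {V : Type} [CommRing V] [Algebra ℂ V] (A : DiffAlg V)

lemma shift {M : Type} [AddCommMonoid M] (g : ℕ → M) (h0 : g 0 = 0)
    (hg : (Function.support g).Finite) : ∑ᶠ m, g m = ∑ᶠ m, g (m + 1) := by
  obtain ⟨N, hN⟩ := hg.toFinset.exists_nat_subset_range
  have h1 : Function.support g ⊆ ↑(Finset.range (N + 1)) := by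
    intro x hx
    have := hN (hg.mem_toFinset.2 hx)
    simp only [Finset.coe_range, Set.mem_Iio, Finset.mem_range] at *
    omega
  have h2 : Function.support (fun m => g (m + 1)) ⊆ ↑(Finset.range N) := by
    intro x hx
    have : g (x+1) ≠ 0 := hx
    have := hN (hg.mem_toFinset.2 this)
    simp only [Finset.coe_range, Set.mem_Iio, Finset.mem_range] at *
    omega
  rw [finsum_eq_sum_of_support_subset _ h1, finsum_eq_sum_of_support_subset _ h2,
    Finset.sum_range_succ', h0, add_zero]

lemma suppFin_of_imp {f g : ℕ → V} (hf : (Function.support f).Finite)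
    (h : ∀ n, f n = 0 → g n = 0) : (Function.support g).Finite := by
  apply hf.subset
  intro n hn
  simp only [Function.mem_support] at *
  exact fun hf0 => hn (h n hf0)

lemma der_finsum (D : Derivation ℂ V V) (g : ℕ → V) (hg : (Function.support g).Finite) :
    D (∑ᶠ n, g n) = ∑ᶠ n, D (g n) := by
  have := AddMonoidHom.map_finsum (D.toLinearMap.toAddMonoidHom) hg
  simpa using this

lemma pd0_total (f : V) : A.pd 0 (A.total f) = A.total (A.pd 0 f) := by
  have hfin : (Function.support fun n => A.u (n + 1) * A.pd n f).Finite :=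
    suppFin_of_imp (A.pdFin f) (fun n h => by rw [h, mul_zero])
  rw [A.total_eq f, map_add, der_finsum _ _ hfin, A.total_eq (A.pd 0 f), A.pd_dx]
  congr 1
  apply finsum_congr
  intro n
  rw [Derivation.leibniz, smul_eq_mul, smul_eq_mul, A.pd_u, A.pd_comm]
  simp

lemma pd_succ_total (m : ℕ) (f : V) :
    A.pd (m + 1) (A.total f) = A.total (A.pd (m + 1) f) + A.pd m f := by
  have hfin : (Function.support fun n => A.u (n + 1) * A.pd n f).Finite :=
    suppFin_of_imp (A.pdFin f) (fun n h => by rw [h, mul_zero])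
  have h1 : (Function.support fun n => A.pd (m+1) (A.u (n + 1)) * A.pd n f).Finite := by
    apply Set.Finite.subset (Set.finite_singleton m)
    intro n hn
    simp only [Function.mem_support, A.pd_u] at hn
    by_contra hne
    simp only [Set.mem_singleton_iff] at hne
    have : ¬ (m + 1 = n + 1) := by omega
    rw [if_neg this, zero_mul] at hn
    exact hn rfl
  have h2 : (Function.support fun n => A.u (n + 1) * A.pd n (A.pd (m+1) f)).Finite :=
    suppFin_of_imp (A.pdFin (A.pd (m+1) f)) (fun n h => by rw [h, mul_zero])
  rw [A.total_eq f, map_add, der_finsum _ _ hfin, A.total_eq (A.pd (m+1) f), A.pd_dx]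
  have hterm : ∀ n, A.pd (m+1) (A.u (n+1) * A.pd n f)
      = A.pd (m+1) (A.u (n + 1)) * A.pd n f + A.u (n + 1) * A.pd n (A.pd (m+1) f) := by
    intro n
    rw [Derivation.leibniz, smul_eq_mul, smul_eq_mul, A.pd_comm]
    ring
  rw [finsum_congr hterm, finsum_add_distrib h1 h2]
  have hsingle : (∑ᶠ n, A.pd (m+1) (A.u (n + 1)) * A.pd n f) = A.pd m f := by
    rw [finsum_eq_single _ m]
    · rw [A.pd_u, if_pos rfl, one_mul]
    · intro n hn
      rw [A.pd_u, if_neg (by omega), zero_mul]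
  rw [hsingle]
  ring

lemma it_succ (n : ℕ) (x : V) :
    (fun y => A.total y)^[n + 1] x = A.total ((fun y => A.total y)^[n] x) :=
  Function.iterate_succ_apply' _ _ _

lemma frech_total (F H : V) :
    A.frechApp (A.total F) H = A.total (A.frechApp F H) := by
  classical
  set e : ℕ → V := fun m => Nat.rec 0 (fun k _ => A.pd k F * (fun x => A.total x)^[k+1] H) m
    with he_def
  have he0 : e 0 = 0 := rfl
  have heS : ∀ k, e (k + 1) = A.pd k F * (fun x => A.total x)^[k+1] H := fun k => rfl
  have heFin : (Function.support e).Finite := by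
    apply Set.Finite.subset (((A.pdFin F).image (· + 1)))
    intro m hm
    match m with
    | 0 => exact absurd rfl hm
    | k + 1 =>
      refine ⟨k, ?_, rfl⟩
      simp only [Set.mem_setOf_eq]
      intro h
      exact hm (by rw [heS, h, zero_mul])
  have hP : (Function.support fun m => A.total (A.pd m F) * (fun x => A.total x)^[m] H).Finite :=
    suppFin_of_imp (A.pdFin F) (fun n h => by rw [h, map_zero, zero_mul])
  have hQ : (Function.support fun m => A.pd m F * (fun x => A.total x)^[m+1] H).Finite :=
    suppFin_of_imp (A.pdFin F) (fun n h => by rw [h, zero_mul])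
  have lhs : A.frechApp (A.total F) H
      = ∑ᶠ m, (A.total (A.pd m F) * (fun x => A.total x)^[m] H + e m) := by
    apply finsum_congr
    intro m
    match m with
    | 0 => rw [pd0_total, he0, add_zero]
    | k + 1 => rw [pd_succ_total, heS, add_mul]
  rw [lhs, finsum_add_distrib hP heFin]
  have hshift : ∑ᶠ m, e m = ∑ᶠ m, A.pd m F * (fun x => A.total x)^[m+1] H := by
    rw [shift e he0 heFin]
  have hmul : (Function.support fun m => A.pd m F * (fun x => A.total x)^[m] H).Finite :=
    suppFin_of_imp (A.pdFin F) (fun n h => by rw [h, zero_mul])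
  have rhs : A.total (A.frechApp F H)
      = ∑ᶠ m, (A.total (A.pd m F) * (fun x => A.total x)^[m] H
          + A.pd m F * (fun x => A.total x)^[m+1] H) := by
    rw [DiffAlg.frechApp, der_finsum _ _ hmul]
    apply finsum_congr
    intro m
    rw [Derivation.leibniz, smul_eq_mul, smul_eq_mul, it_succ]
    ring
  rw [rhs, finsum_add_distrib hP hQ, hshift]

lemma frech_total_iter (n : ℕ) (F H : V) :
    A.frechApp ((fun x => A.total x)^[n] F) H
      = (fun x => A.total x)^[n] (A.frechApp F H) := by
  induction n with
  | zero => rfl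
  | succ k ih => rw [it_succ, it_succ, frech_total, ih]


lemma evf_zero (F : V) : A.evf F 0 = 0 := by
  simp [DiffAlg.evf]

lemma pd_evf (m : ℕ) (F G : V) :
    A.pd m (A.evf F G)
      = A.evf F (A.pd m G) + ∑ᶠ n, A.pd m ((fun x => A.total x)^[n] F) * A.pd n G := by
  have h0 : (Function.support fun n => (fun x => A.total x)^[n] F * A.pd n G).Finite :=
    suppFin_of_imp (A.pdFin G) (fun n h => by rw [h, mul_zero])
  have h1 : (Function.support fun n => (fun x => A.total x)^[n] F * A.pd n (A.pd m G)).Finite :=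
    suppFin_of_imp (A.pdFin (A.pd m G)) (fun n h => by rw [h, mul_zero])
  have h2 : (Function.support fun n => A.pd m ((fun x => A.total x)^[n] F) * A.pd n G).Finite :=
    suppFin_of_imp (A.pdFin G) (fun n h => by rw [h, mul_zero])
  rw [DiffAlg.evf, der_finsum _ _ h0]
  have hterm : ∀ n, A.pd m ((fun x => A.total x)^[n] F * A.pd n G)
      = (fun x => A.total x)^[n] F * A.pd n (A.pd m G)
        + A.pd m ((fun x => A.total x)^[n] F) * A.pd n G := by
    intro n
    rw [Derivation.leibniz, smul_eq_mul, smul_eq_mul, A.pd_comm]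
    ring
  rw [finsum_congr hterm, finsum_add_distrib h1 h2]
  rfl

lemma frech_evf (F G H : V) :
    A.frechApp (A.evf F G) H
      = A.evfFrech F G H + A.frechApp G (A.frechApp F H) := by
  classical
  set t : Finset ℕ := (A.pdFin G).toFinset with ht
  set s : Finset ℕ :=
    t.biUnion (fun n => (A.pdFin ((fun x => A.total x)^[n] F)).toFinset) with hs
  have hmt : ∀ n, n ∈ t ↔ A.pd n G ≠ 0 := fun n => Set.Finite.mem_toFinset _
  have hms : ∀ m n, n ∈ t → A.pd m ((fun x => A.total x)^[n] F) ≠ 0 → m ∈ s := by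
    intro m n hn h
    rw [hs]
    exact Finset.mem_biUnion.2 ⟨n, hn, (Set.Finite.mem_toFinset _).2 h⟩
  set b : ℕ → ℕ → V := fun m n =>
    A.pd m ((fun x => A.total x)^[n] F) * (fun x => A.total x)^[m] H * A.pd n G with hb
  have hb0 : ∀ m n, A.pd n G = 0 → b m n = 0 := fun m n h => by rw [hb]; simp [h]
  have hb0' : ∀ m n, A.pd m ((fun x => A.total x)^[n] F) = 0 → b m n = 0 :=
    fun m n h => by rw [hb]; simp [h]
  have stepA : A.frechApp (A.evf F G) H
      = ∑ᶠ m, (A.evf F (A.pd m G) * (fun x => A.total x)^[m] H + ∑ᶠ n, b m n) := by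
    apply finsum_congr
    intro m
    rw [pd_evf, add_mul]
    congr 1
    rw [finsum_mul' _ _ (suppFin_of_imp (A.pdFin G) (fun n h => by rw [h, mul_zero]))]
    apply finsum_congr
    intro n
    rw [hb]
    ring
  have hA : (Function.support
      fun m => A.evf F (A.pd m G) * (fun x => A.total x)^[m] H).Finite :=
    suppFin_of_imp (A.pdFin G) (fun m h => by rw [h, evf_zero, zero_mul])
  have hBsub : (Function.support fun m => ∑ᶠ n, b m n) ⊆ ↑s := by
    intro m hm
    by_contra hms'
    apply hm
    simp only [Function.mem_support]
    apply finsum_eq_zero_of_forall_eq_zero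
    intro n
    by_cases hnG : A.pd n G = 0
    · exact hb0 m n hnG
    · by_cases hpd : A.pd m ((fun x => A.total x)^[n] F) = 0
      · exact hb0' m n hpd
      · exact absurd (hms m n ((hmt n).2 hnG) hpd) hms'
  have hB : (Function.support fun m => ∑ᶠ n, b m n).Finite :=
    Set.Finite.subset s.finite_toSet hBsub
  rw [stepA, finsum_add_distrib hA hB]
  congr 1
  -- the double sum
  have hD : (∑ᶠ m, ∑ᶠ n, b m n) = ∑ m ∈ s, ∑ n ∈ t, b m n := by
    rw [finsum_eq_sum_of_support_subset _ hBsub]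
    apply Finset.sum_congr rfl
    intro m _
    apply finsum_eq_sum_of_support_subset
    intro n hn
    by_contra hnt
    exact hn (hb0 m n (by simpa [hmt n] using hnt))
  rw [hD, Finset.sum_comm]
  have hinner : ∀ n ∈ t, (∑ m ∈ s, b m n)
      = A.pd n G * (fun x => A.total x)^[n] (A.frechApp F H) := by
    intro n hn
    have : (∑ m ∈ s, b m n) = ∑ᶠ m, b m n := by
      rw [finsum_eq_sum_of_support_subset]
      intro m hm
      by_contra hm'
      by_cases hpd : A.pd m ((fun x => A.total x)^[n] F) = 0
      · exact hm (hb0' m n hpd)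
      · exact hm' (hms m n hn hpd)
    rw [this]
    have : (∑ᶠ m, b m n)
        = (∑ᶠ m, A.pd m ((fun x => A.total x)^[n] F) * (fun x => A.total x)^[m] H)
          * A.pd n G := by
      rw [finsum_mul' _ _ (suppFin_of_imp (A.pdFin ((fun x => A.total x)^[n] F))
        (fun m h => by rw [h, zero_mul]))]
    rw [this]
    have : (∑ᶠ m, A.pd m ((fun x => A.total x)^[n] F) * (fun x => A.total x)^[m] H)
        = A.frechApp ((fun x => A.total x)^[n] F) H := rfl
    rw [this, frech_total_iter]
    ring
  rw [Finset.sum_congr rfl hinner]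
  have : A.frechApp G (A.frechApp F H)
      = ∑ n ∈ t, A.pd n G * (fun x => A.total x)^[n] (A.frechApp F H) := by
    apply finsum_eq_sum_of_support_subset
    intro n hn
    simp only [Function.mem_support] at hn
    rw [Finset.mem_coe, hmt n]
    intro h
    exact hn (by rw [h, zero_mul])
  rw [this]

lemma frech_sub (a b H : V) :
    A.frechApp (a - b) H = A.frechApp a H - A.frechApp b H := by
  have ha : (Function.support fun m => A.pd m a * (fun x => A.total x)^[m] H).Finite :=
    suppFin_of_imp (A.pdFin a) (fun n h => by rw [h, zero_mul])
  have hb : (Function.support fun m => A.pd m b * (fun x => A.total x)^[m] H).Finite :=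
    suppFin_of_imp (A.pdFin b) (fun n h => by rw [h, zero_mul])
  rw [DiffAlg.frechApp, DiffAlg.frechApp, DiffAlg.frechApp, ← finsum_sub_distrib ha hb]
  apply finsum_congr
  intro m
  rw [map_sub, sub_mul]

end DAux

/-- for all `F, G` in `V`,
`X_F(D_G) = [D_F, D_G] + X_G(D_F) + D_{{F,G}}` where `{F,G} = X_F(G) - X_G(F)`
(both sides applied to an arbitrary `H`). -/
theorem evf_of_frechet {V : Type} [CommRing V] [Algebra ℂ V] (A : DiffAlg V)
    (F G Hf : V) :
    DiffAlg.evfFrech A F G Hf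
      = (DiffAlg.frechApp A F (DiffAlg.frechApp A G Hf)
          - DiffAlg.frechApp A G (DiffAlg.frechApp A F Hf))
        + DiffAlg.evfFrech A G F Hf
        + DiffAlg.frechApp A (DiffAlg.evf A F G - DiffAlg.evf A G F) Hf := by
  rw [DAux.frech_sub, DAux.frech_evf A F G Hf, DAux.frech_evf A G F Hf]
  ring
end

section
/- The map φ from V ⊗_C V to the space of non-local operators sending f ⊗ g to f ∂^{-1} g is injective: if f_1,…,f_n and g_1,…,g_n are each linearly independent over the constants C, then Σ_{i=1}^n f_i ∂^{-1} g_i = 0 (as a pseudodifferential operator) forces all terms to vanish. Consequently, the space of weakly non-local operators W_V is isomorphic as a vector space to V[∂] ⊕ (V ⊗_C V). -/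
section Aux
variable {K : Type} [Field K]

lemma my_d_zero (d : K → K) (hadd : ∀ x y, d (x + y) = d x + d y) : d 0 = 0 := by
  have h := hadd 0 0
  rw [add_zero] at h
  exact (left_eq_add.mp h)

lemma my_d_one (d : K → K) (hleib : ∀ x y, d (x * y) = x * d y + d x * y) : d 1 = 0 := by
  have h := hleib 1 1
  rw [one_mul, one_mul, mul_one] at h
  exact (left_eq_add.mp h)

lemma my_d_sum (d : K → K) (hadd : ∀ x y, d (x + y) = d x + d y)
    {ι : Type} (s : Finset ι) (f : ι → K) :
    d (∑ i ∈ s, f i) = ∑ i ∈ s, d (f i) :=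
  map_sum (AddMonoidHom.mk' d hadd) f s

lemma lemA (d : K → K) (hadd : ∀ x y, d (x + y) = d x + d y)
    (hleib : ∀ x y, d (x * y) = x * d y + d x * y)
    {ι : Type} [DecidableEq ι] (s : Finset ι) (g : ι → K) :
    ∀ h : ι → K,
    (∀ c : ι → K, (∀ i ∈ s, d (c i) = 0) → ∑ i ∈ s, c i * g i = 0 → ∀ i ∈ s, c i = 0) →
    (∀ k : ℕ, ∑ i ∈ s, h i * d^[k] (g i) = 0) →
    ∀ i ∈ s, h i = 0 := by
  classical
  induction s using Finset.induction with
  | empty => simp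
  | @insert a s ha IH =>
    intro h hg hrel
    have dstep : ∀ (h' : ι → K), (∀ k : ℕ, ∑ i ∈ insert a s, h' i * d^[k] (g i) = 0) →
        ∀ k : ℕ, ∑ i ∈ insert a s, d (h' i) * d^[k] (g i) = 0 := by
      intro h' hrel' k
      have h0 : d (∑ i ∈ insert a s, h' i * d^[k] (g i)) = 0 := by
        rw [hrel' k, my_d_zero d hadd]
      rw [my_d_sum d hadd] at h0
      have h1 : ∑ i ∈ insert a s, (h' i * d^[k+1] (g i) + d (h' i) * d^[k] (g i)) = 0 := by
        rw [← h0]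
        refine Finset.sum_congr rfl fun i _ => ?_
        rw [hleib, Function.iterate_succ_apply']
      rw [Finset.sum_add_distrib, hrel' (k+1), zero_add] at h1
      exact h1
    have hgs : ∀ c : ι → K, (∀ i ∈ s, d (c i) = 0) → ∑ i ∈ s, c i * g i = 0 → ∀ i ∈ s, c i = 0 := by
      intro c hc hcs i hi
      set c' : ι → K := fun j => if j ∈ s then c j else 0 with hc'
      have key := hg c' ?_ ?_ i (Finset.mem_insert_of_mem hi)
      · simpa [hc', hi] using key
      · intro j _
        by_cases hjs : j ∈ s
        · simpa [hc', hjs] using hc j hjs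
        · simp [hc', hjs, my_d_zero d hadd]
      · have e : ∑ j ∈ insert a s, c' j * g j = ∑ j ∈ s, c j * g j := by
          rw [Finset.sum_insert ha]
          have ha0 : c' a = 0 := by simp [hc', ha]
          rw [ha0, zero_mul, zero_add]
          exact Finset.sum_congr rfl fun j hj => by simp [hc', hj]
        rw [e]; exact hcs
    by_cases hha : h a = 0
    · have hrels : ∀ k : ℕ, ∑ i ∈ s, h i * d^[k] (g i) = 0 := by
        intro k
        have := hrel k
        rwa [Finset.sum_insert ha, hha, zero_mul, zero_add] at this
      intro i hi
      rcases Finset.mem_insert.mp hi with rfl | hi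
      · exact hha
      · exact IH h hgs hrels i hi
    · exfalso
      set H : ι → K := fun i => h i / h a with hH
      have hrelH : ∀ k : ℕ, ∑ i ∈ insert a s, H i * d^[k] (g i) = 0 := by
        intro k
        have e1 : ∑ i ∈ insert a s, H i * d^[k] (g i)
            = (h a)⁻¹ * ∑ i ∈ insert a s, h i * d^[k] (g i) := by
          rw [Finset.mul_sum]
          refine Finset.sum_congr rfl fun i _ => ?_
          rw [hH]; ring
        rw [e1, hrel k, mul_zero]
      have hdH := dstep H hrelH
      have hdHa : d (H a) = 0 := by
        have : H a = 1 := div_self hha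
        rw [this, my_d_one d hleib]
      have hdHs : ∀ k : ℕ, ∑ i ∈ s, d (H i) * d^[k] (g i) = 0 := by
        intro k
        have := hdH k
        rwa [Finset.sum_insert ha, hdHa, zero_mul, zero_add] at this
      have hconst : ∀ i ∈ s, d (H i) = 0 := IH (fun i => d (H i)) hgs hdHs
      have hconst' : ∀ i ∈ insert a s, d (H i) = 0 := by
        intro i hi
        rcases Finset.mem_insert.mp hi with rfl | hi
        · exact hdHa
        · exact hconst i hi
      have hHzero : ∀ i ∈ insert a s, H i = 0 := by
        refine hg H hconst' ?_
        simpa using hrelH 0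
      have h1 : h a / h a = 0 := hHzero a (Finset.mem_insert_self a s)
      rw [div_self hha] at h1
      exact one_ne_zero h1

lemma my_dk_add (d : K → K) (hadd : ∀ x y, d (x + y) = d x + d y) (k : ℕ) (x y : K) :
    d^[k] (x + y) = d^[k] x + d^[k] y := by
  induction k generalizing x y with
  | zero => simp
  | succ k IH =>
    rw [Function.iterate_succ_apply, hadd, IH, Function.iterate_succ_apply,
      Function.iterate_succ_apply]

lemma my_dk_smul (d : K → K) (hadd : ∀ x y, d (x + y) = d x + d y)
    (hleib : ∀ x y, d (x * y) = x * d y + d x * y)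
    (C : Subfield K) (hC : ∀ x : K, x ∈ C ↔ d x = 0) (a : C) (k : ℕ) (x : K) :
    d^[k] ((a : K) * x) = (a : K) * d^[k] x := by
  induction k generalizing x with
  | zero => simp
  | succ k IH =>
    rw [Function.iterate_succ_apply, hleib, (hC a).mp a.2, zero_mul, add_zero,
      Function.iterate_succ_apply, IH]

noncomputable def Phi (d : K → K) (hadd : ∀ x y, d (x + y) = d x + d y)
    (hleib : ∀ x y, d (x * y) = x * d y + d x * y)
    (C : Subfield K) (hC : ∀ x : K, x ∈ C ↔ d x = 0) (k : ℕ) :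
    TensorProduct C K K →ₗ[C] K :=
  TensorProduct.lift (LinearMap.mk₂ C (fun p q => p * d^[k] q)
    (fun p p' q => add_mul p p' _)
    (fun a p q => smul_mul_assoc a p _)
    (fun p q q' => by show p * d^[k] (q + q') = _; rw [my_dk_add d hadd, mul_add])
    (fun a p q => by
      show p * d^[k] (a • q) = a • (p * d^[k] q)
      have h2 : ∀ z : K, a • z = (a : K) * z := fun z => rfl
      rw [h2, my_dk_smul d hadd hleib C hC, h2]; ring))

lemma Phi_tmul (d : K → K) (hadd : ∀ x y, d (x + y) = d x + d y)
    (hleib : ∀ x y, d (x * y) = x * d y + d x * y)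
    (C : Subfield K) (hC : ∀ x : K, x ∈ C ↔ d x = 0) (k : ℕ) (p q : K) :
    Phi d hadd hleib C hC k (p ⊗ₜ[C] q) = p * d^[k] q := rfl

lemma tensor_decomp (C : Subfield K) (t : TensorProduct C K K) :
    ∃ (n : ℕ) (p q : Fin n → K), t = ∑ i, p i ⊗ₜ[C] q i := by
  induction t using TensorProduct.induction_on with
  | zero => exact ⟨0, ![], ![], by simp⟩
  | tmul x y => exact ⟨1, fun _ => x, fun _ => y, by simp⟩
  | add t1 t2 h1 h2 =>
    obtain ⟨n, p, q, rfl⟩ := h1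
    obtain ⟨m, p', q', rfl⟩ := h2
    refine ⟨n + m, Fin.append p p', Fin.append q q', ?_⟩
    rw [Fin.sum_univ_add]
    congr 1
    · exact Finset.sum_congr rfl fun i _ => by rw [Fin.append_left, Fin.append_left]
    · exact Finset.sum_congr rfl fun i _ => by rw [Fin.append_right, Fin.append_right]

lemma tensor_repr (C : Subfield K) (t : TensorProduct C K K) :
    ∃ F : Module.Basis.ofVectorSpaceIndex C K →₀ K,
      t = F.sum (fun j m => m ⊗ₜ[C] ((Module.Basis.ofVectorSpace C K) j)) := by
  classical
  set b := Module.Basis.ofVectorSpace C K with hb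
  induction t using TensorProduct.induction_on with
  | zero => exact ⟨0, by simp⟩
  | tmul x y =>
    refine ⟨Finsupp.mapRange (fun c : C => (c : K) * x) (by simp) (b.repr y), ?_⟩
    rw [Finsupp.sum_mapRange_index (fun j => TensorProduct.zero_tmul K (b j))]
    have hy : y = (b.repr y).sum (fun j c => c • b j) := by
      conv_lhs => rw [← b.linearCombination_repr y]
      rfl
    conv_lhs => rw [hy]
    rw [Finsupp.sum, Finsupp.sum, TensorProduct.tmul_sum]
    refine Finset.sum_congr rfl fun j _ => ?_
    have e1 : x ⊗ₜ[C] ((b.repr y) j • b j) = ((b.repr y) j) • (x ⊗ₜ[C] b j) :=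
      map_smul (TensorProduct.mk C K K x) _ _
    rw [e1]; refine (TensorProduct.smul_tmul' _ _ _).trans ?_
    rfl
  | add t1 t2 h1 h2 =>
    obtain ⟨F1, rfl⟩ := h1
    obtain ⟨F2, rfl⟩ := h2
    refine ⟨F1 + F2, ?_⟩
    rw [Finsupp.sum_add_index' (fun j => TensorProduct.zero_tmul K (b j))
      (fun j m m' => TensorProduct.add_tmul m m' (b j))]

lemma tensor_inj (d : K → K) (hadd : ∀ x y, d (x + y) = d x + d y)
    (hleib : ∀ x y, d (x * y) = x * d y + d x * y)
    (C : Subfield K) (hC : ∀ x : K, x ∈ C ↔ d x = 0)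
    (t : TensorProduct C K K) (ht : ∀ k : ℕ, Phi d hadd hleib C hC k t = 0) : t = 0 := by
  classical
  obtain ⟨F, rfl⟩ := tensor_repr C t
  set b := Module.Basis.ofVectorSpace C K with hb
  have hrel : ∀ k : ℕ, ∑ j ∈ F.support, F j * d^[k] (b j) = 0 := by
    intro k
    have h0 := ht k
    rw [map_finsuppSum] at h0
    exact h0
  have hind : ∀ c : Module.Basis.ofVectorSpaceIndex C K → K,
      (∀ j ∈ F.support, d (c j) = 0) → ∑ j ∈ F.support, c j * b j = 0 →
      ∀ j ∈ F.support, c j = 0 := by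
    intro c hc hsum j hj
    set c' : Module.Basis.ofVectorSpaceIndex C K → C :=
      fun j => if hj : j ∈ F.support then ⟨c j, (hC _).mpr (hc j hj)⟩ else 0 with hc'
    have hli := linearIndependent_iff'.mp b.linearIndependent F.support c' ?_ j hj
    · have hcc : c' j = ⟨c j, (hC _).mpr (hc j hj)⟩ := by
        simp only [hc', dif_pos hj]
      have : (⟨c j, (hC _).mpr (hc j hj)⟩ : C) = 0 := hcc ▸ hli
      exact congrArg Subtype.val this
    · rw [← hsum]
      refine Finset.sum_congr rfl fun i hi => ?_
      simp only [hc', dif_pos hi]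
      rfl
  have hF0 : F = 0 := by
    ext j
    by_cases hj : j ∈ F.support
    · exact lemA d hadd hleib F.support (fun j => b j) F hind hrel j hj
    · simpa using Finsupp.notMem_support_iff.mp hj
  rw [hF0, Finsupp.sum_zero_index]

lemma Phi_finsum (d : K → K) (hadd : ∀ x y, d (x + y) = d x + d y)
    (hleib : ∀ x y, d (x * y) = x * d y + d x * y)
    (C : Subfield K) (hC : ∀ x : K, x ∈ C ↔ d x = 0) (k : ℕ)
    {n : ℕ} (p q : Fin n → K) :
    Phi d hadd hleib C hC k (∑ i, p i ⊗ₜ[C] q i) = ∑ i, p i * d^[k] (q i) := by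
  rw [map_sum]
  rfl

end Aux

/-- `c : ℤ → K` is the coefficient function of a weakly non-local pseudodifferential
operator `E(∂) + Σ_i p_i ∂⁻¹ q_i` (coefficients bounded above; the negative
coefficients come from `Σ_i p_i ∂⁻¹ q_i`, using
`∂⁻¹ q = Σ_{j ≥ 0} (-1)^j q⁽ʲ⁾ ∂^{-1-j}`). -/
def IsWNL {K : Type} [Field K] (d : K → K) (c : ℤ → K) : Prop :=
  (∃ N : ℤ, ∀ m : ℤ, N < m → c m = 0) ∧
  ∃ (n : ℕ) (p q : Fin n → K), ∀ m : ℤ, m < 0 →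
    c m = ∑ i, p i * ((-1 : K) ^ ((-1 - m).toNat) * d^[(-1 - m).toNat] (q i))


section Main2
variable {K : Type} [Field K]

noncomputable def psi (d : K → K) (hadd : ∀ x y, d (x + y) = d x + d y)
    (hleib : ∀ x y, d (x * y) = x * d y + d x * y)
    (C : Subfield K) (hC : ∀ x : K, x ∈ C ↔ d x = 0)
    (z : (ℕ →₀ K) × TensorProduct C K K) : ℤ → K :=
  fun m => if 0 ≤ m then z.1 m.toNat
    else (-1 : K) ^ ((-1 - m).toNat) * Phi d hadd hleib C hC ((-1 - m).toNat) z.2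

lemma psi_isWNL (d : K → K) (hadd : ∀ x y, d (x + y) = d x + d y)
    (hleib : ∀ x y, d (x * y) = x * d y + d x * y)
    (C : Subfield K) (hC : ∀ x : K, x ∈ C ↔ d x = 0)
    (z : (ℕ →₀ K) × TensorProduct C K K) :
    IsWNL d (psi d hadd hleib C hC z) := by
  constructor
  · refine ⟨((z.1.support.sup id : ℕ) : ℤ), fun m hm => ?_⟩
    have hm0 : (0 : ℤ) ≤ m := le_of_lt (lt_of_le_of_lt (Int.ofNat_nonneg _) hm)
    rw [psi, if_pos hm0]
    apply Finsupp.notMem_support_iff.mp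
    intro hmem
    have h1 : m.toNat ≤ z.1.support.sup id := Finset.le_sup (f := id) hmem
    have h2 : z.1.support.sup id < m.toNat := Int.lt_toNat.mpr hm
    omega
  · obtain ⟨n, p, q, ht⟩ := tensor_decomp C z.2
    refine ⟨n, p, q, fun m hm => ?_⟩
    rw [psi, if_neg (not_le.mpr hm), ht,
      Phi_finsum d hadd hleib C hC ((-1 - m).toNat) p q, Finset.mul_sum]
    exact Finset.sum_congr rfl fun i _ => by ring

lemma psi_add (d : K → K) (hadd : ∀ x y, d (x + y) = d x + d y)
    (hleib : ∀ x y, d (x * y) = x * d y + d x * y)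
    (C : Subfield K) (hC : ∀ x : K, x ∈ C ↔ d x = 0)
    (z w : (ℕ →₀ K) × TensorProduct C K K) :
    psi d hadd hleib C hC (z + w) = psi d hadd hleib C hC z + psi d hadd hleib C hC w := by
  funext m
  show psi d hadd hleib C hC (z + w) m = psi d hadd hleib C hC z m + psi d hadd hleib C hC w m
  by_cases hm : 0 ≤ m
  · simp only [psi, if_pos hm]
    exact Finsupp.add_apply z.1 w.1 m.toNat
  · simp only [psi, if_neg hm]
    have : Phi d hadd hleib C hC ((-1 - m).toNat) (z.2 + w.2)
        = Phi d hadd hleib C hC ((-1 - m).toNat) z.2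
          + Phi d hadd hleib C hC ((-1 - m).toNat) w.2 := map_add _ _ _
    rw [show (z + w).2 = z.2 + w.2 from rfl, this, mul_add]

lemma psi_smul (d : K → K) (hadd : ∀ x y, d (x + y) = d x + d y)
    (hleib : ∀ x y, d (x * y) = x * d y + d x * y)
    (C : Subfield K) (hC : ∀ x : K, x ∈ C ↔ d x = 0)
    (a : C) (z : (ℕ →₀ K) × TensorProduct C K K) :
    psi d hadd hleib C hC (a • z) = a • psi d hadd hleib C hC z := by
  funext m
  show psi d hadd hleib C hC (a • z) m = a • psi d hadd hleib C hC z m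
  by_cases hm : 0 ≤ m
  · simp only [psi, if_pos hm]
    show ((a • z.1) : ℕ →₀ K) m.toNat = a • (z.1 m.toNat)
    exact Finsupp.smul_apply a z.1 m.toNat
  · simp only [psi, if_neg hm]
    have h1 : Phi d hadd hleib C hC ((-1 - m).toNat) ((a • z).2)
        = a • Phi d hadd hleib C hC ((-1 - m).toNat) z.2 :=
      (Phi d hadd hleib C hC ((-1 - m).toNat)).map_smul a z.2
    rw [h1]
    have h2 : ∀ x : K, a • x = (a : K) * x := fun x => rfl
    rw [h2, h2]
    ring

lemma psi_inj (d : K → K) (hadd : ∀ x y, d (x + y) = d x + d y)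
    (hleib : ∀ x y, d (x * y) = x * d y + d x * y)
    (C : Subfield K) (hC : ∀ x : K, x ∈ C ↔ d x = 0)
    (z w : (ℕ →₀ K) × TensorProduct C K K)
    (h : psi d hadd hleib C hC z = psi d hadd hleib C hC w) : z = w := by
  have h1 : z.1 = w.1 := by
    ext k
    have := congrFun h (k : ℤ)
    simp only [psi, if_pos (Int.ofNat_nonneg k), Int.toNat_natCast] at this
    exact this
  have h2 : z.2 = w.2 := by
    have key : ∀ k : ℕ, Phi d hadd hleib C hC k (z.2 - w.2) = 0 := by
      intro k
      have hm : ¬ (0 : ℤ) ≤ (-1 - (k : ℤ)) := by omega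
      have := congrFun h (-1 - (k : ℤ))
      simp only [psi, if_neg hm] at this
      have hk : (-1 - (-1 - (k : ℤ))).toNat = k := by omega
      rw [hk] at this
      rw [map_sub]
      have hne : ((-1 : K) ^ k) ≠ 0 := pow_ne_zero k (neg_ne_zero.mpr one_ne_zero)
      have := mul_left_cancel₀ hne this
      rw [this, sub_self]
    have := tensor_inj d hadd hleib C hC (z.2 - w.2) key
    exact sub_eq_zero.mp this
  exact Prod.ext h1 h2

variable {K : Type} [Field K]

lemma psi_surj (d : K → K) (hadd : ∀ x y, d (x + y) = d x + d y)
    (hleib : ∀ x y, d (x * y) = x * d y + d x * y)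
    (C : Subfield K) (hC : ∀ x : K, x ∈ C ↔ d x = 0)
    (c : ℤ → K) (hc : IsWNL d c) :
    ∃ z, psi d hadd hleib C hC z = c := by
  classical
  obtain ⟨⟨N, hN⟩, n, p, q, hneg⟩ := hc
  refine ⟨(Finsupp.onFinset (Finset.range (N.toNat + 1)) (fun k => c (k : ℤ))
    (fun k hk => ?_), ∑ i, p i ⊗ₜ[C] q i), ?_⟩
  · rw [Finset.mem_range]
    by_contra hk'
    push_neg at hk'
    exact hk (hN k (by omega))
  · funext m
    by_cases hm : 0 ≤ m
    · rw [psi, if_pos hm]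
      show c ((m.toNat : ℤ)) = c m
      rw [Int.toNat_of_nonneg hm]
    · rw [psi, if_neg hm]
      rw [Phi_finsum d hadd hleib C hC _ p q, hneg m (not_le.mp hm), Finset.mul_sum]
      exact Finset.sum_congr rfl fun i _ => by ring

end Main2

/-- the map `f ⊗ g ↦ f ∂⁻¹ g` is injective: if `f_1, ..., f_n` and
`g_1, ..., g_n` are each linearly independent over the constants `C` and
`Σ_i f_i ∂⁻¹ g_i = 0` as a pseudodifferential operator (i.e. `Σ_i f_i g_i⁽ᵏ⁾ = 0`
for all `k ≥ 0`), then all terms vanish (forcing `n = 0`). Consequently the space of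
weakly non-local operators is isomorphic, as a `C`-vector space, to
`K[∂] ⊕ (K ⊗_C K)`. -/
theorem wnl_injective_and_decomposition {K : Type} [Field K] (d : K → K)
    (hadd : ∀ x y, d (x + y) = d x + d y)
    (hleib : ∀ x y, d (x * y) = x * d y + d x * y)
    (C : Subfield K) (hC : ∀ x : K, x ∈ C ↔ d x = 0) :
    (∀ (n : ℕ) (f g : Fin n → K),
      (∀ c : Fin n → K, (∀ i, d (c i) = 0) → ∑ i, c i * f i = 0 → ∀ i, c i = 0) →
      (∀ c : Fin n → K, (∀ i, d (c i) = 0) → ∑ i, c i * g i = 0 → ∀ i, c i = 0) →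
      (∀ k : ℕ, ∑ i, f i * d^[k] (g i) = 0) → n = 0) ∧
    ∃ e : {c : ℤ → K // IsWNL d c} ≃ ((ℕ →₀ K) × TensorProduct C K K),
      (∀ x y : {c : ℤ → K // IsWNL d c}, ∀ hxy : IsWNL d (x.1 + y.1),
        e ⟨x.1 + y.1, hxy⟩ = e x + e y) ∧
      (∀ (a : C) (x : {c : ℤ → K // IsWNL d c}) (hax : IsWNL d (a • x.1)),
        e ⟨a • x.1, hax⟩ = a • e x) := by
  constructor
  · intro n f g hf hg hrel
    by_contra hn
    have hn' : 0 < n := Nat.pos_of_ne_zero hn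
    have hg' : ∀ c : Fin n → K, (∀ i ∈ Finset.univ, d (c i) = 0) →
        ∑ i ∈ Finset.univ, c i * g i = 0 → ∀ i ∈ Finset.univ, c i = 0 :=
      fun c hc hs i _ => hg c (fun i => hc i (Finset.mem_univ i)) hs i
    have hf0 : ∀ i, f i = 0 := fun i =>
      lemA d hadd hleib Finset.univ g f hg' (fun k => hrel k) i (Finset.mem_univ i)
    have := hf (fun _ => 1) (fun _ => my_d_one d hleib) (by simp [hf0]) ⟨0, hn'⟩
    exact one_ne_zero this
  · set Ψ : ((ℕ →₀ K) × TensorProduct C K K) → {c : ℤ → K // IsWNL d c} :=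
      fun z => ⟨psi d hadd hleib C hC z, psi_isWNL d hadd hleib C hC z⟩ with hΨ
    have hbij : Function.Bijective Ψ := by
      constructor
      · intro z w hzw
        exact psi_inj d hadd hleib C hC z w (congrArg Subtype.val hzw)
      · rintro ⟨c, hc⟩
        obtain ⟨z, hz⟩ := psi_surj d hadd hleib C hC c hc
        exact ⟨z, Subtype.ext hz⟩
    set G : ((ℕ →₀ K) × TensorProduct C K K) ≃ {c : ℤ → K // IsWNL d c} :=
      Equiv.ofBijective Ψ hbij with hG
    refine ⟨G.symm, ?_, ?_⟩
    · intro x y hxy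
      have hx : psi d hadd hleib C hC (G.symm x) = x.1 :=
        congrArg Subtype.val (G.apply_symm_apply x)
      have hy : psi d hadd hleib C hC (G.symm y) = y.1 :=
        congrArg Subtype.val (G.apply_symm_apply y)
      have key : G (G.symm x + G.symm y) = ⟨x.1 + y.1, hxy⟩ := by
        apply Subtype.ext
        show psi d hadd hleib C hC (G.symm x + G.symm y) = x.1 + y.1
        rw [psi_add, hx, hy]
      calc G.symm ⟨x.1 + y.1, hxy⟩ = G.symm (G (G.symm x + G.symm y)) := by rw [key]
        _ = G.symm x + G.symm y := G.symm_apply_apply _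
    · intro a x hax
      have hx : psi d hadd hleib C hC (G.symm x) = x.1 :=
        congrArg Subtype.val (G.apply_symm_apply x)
      have key : G (a • G.symm x) = ⟨a • x.1, hax⟩ := by
        apply Subtype.ext
        show psi d hadd hleib C hC (a • G.symm x) = a • x.1
        rw [psi_smul, hx]
      calc G.symm ⟨a • x.1, hax⟩ = G.symm (G (a • G.symm x)) := by rw [key]
        _ = a • G.symm x := G.symm_apply_apply _
end
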